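/- Every partition with m parts, each part congruent to a or b modulo k, can be written uniquely as the part-wise sum of a partition in B_{a,b,k}(m) and a non-increasing sequence of m nonnegative multiples of k; i.e., P_{a,b,k} is a separable integer partition class with modulus k and basis B_{a,b,k}. -/

import Mathlib

noncomputable section

/-- The basis set B_{a,b,k}(m). -/
def IsBabk (a b k m : ℕ) (l : List ℕ) : Prop :=
  l.length = m ∧ l.Pairwise (· ≥ ·) ∧
    (∀ x ∈ l, x % k = a % k ∨ x % k = b % k) ∧
    (l.getLast? = some a ∨ l.getLast? = some b) ∧
    l.Chain' (fun x y => x < y + k)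

/-- Membership in P_{a,b,k}: a partition all of whose parts are ≡ a or b mod k. -/
def InPabk (a b k : ℕ) (l : List ℕ) : Prop :=
  l.Pairwise (· ≥ ·) ∧ ∀ x ∈ l, 0 < x ∧ (x % k = a % k ∨ x % k = b % k)

namespace Stmt8Aux

open List

def nextLam (k prev x : ℕ) : ℕ := prev + (x - prev) % k

def stepLam (k : ℕ) : ℕ → List ℕ → List ℕ
  | _, [] => []
  | prev, x :: xs => nextLam k prev x :: stepLam k (nextLam k prev x) xs

lemma nextLam_lb (k prev x : ℕ) : prev ≤ nextLam k prev x := Nat.le_add_right _ _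

lemma nextLam_ub (k prev x : ℕ) (hk : 0 < k) : nextLam k prev x < prev + k := by
  have := Nat.mod_lt (x - prev) hk
  unfold nextLam; omega

lemma nextLam_decomp (k prev x : ℕ) (hpx : prev ≤ x) :
    ∃ d, x = nextLam k prev x + k * d := by
  refine ⟨(x - prev) / k, ?_⟩
  have := Nat.mod_add_div (x - prev) k
  unfold nextLam; omega

lemma nextLam_unique (k prev x l d : ℕ) (hk : 0 < k) (hl : prev ≤ l) (hl2 : l < prev + k)
    (hx : x = l + k * d) : nextLam k prev x = l := by
  subst hx
  unfold nextLam
  have h1 : l + k * d - prev = (l - prev) + k * d := by omega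
  rw [h1, Nat.add_mul_mod_self_left, Nat.mod_eq_of_lt (by omega)]
  omega

lemma stepLam_spec (k : ℕ) (hk : 0 < k) : ∀ (ρ : List ℕ) (prev : ℕ),
    ρ.Chain' (· ≤ ·) → (∀ h ∈ ρ.head?, prev ≤ h) →
    (stepLam k prev ρ).length = ρ.length ∧
    List.Forall₂ (fun l x => ∃ d, x = l + k * d) (stepLam k prev ρ) ρ ∧
    (∀ h ∈ (stepLam k prev ρ).head?, prev ≤ h ∧ h < prev + k) ∧
    (stepLam k prev ρ).Chain' (fun p q => p ≤ q ∧ q < p + k) ∧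
    (List.zipWith (· - ·) ρ (stepLam k prev ρ)).Chain' (· ≤ ·) ∧
    (∀ y ∈ List.zipWith (· - ·) ρ (stepLam k prev ρ), k ∣ y) := by
  intro ρ
  induction ρ with
  | nil => intro prev _ _; simp [stepLam, List.Chain', List.isChain_nil]
  | cons x xs ih =>
    intro prev hch hprev
    have hpx : prev ≤ x := hprev x rfl
    set l := nextLam k prev x with hl
    obtain ⟨d, hd⟩ := nextLam_decomp k prev x hpx
    have hlx : l ≤ x := by omega
    have hchtail : xs.Chain' (· ≤ ·) := hch.tail
    have hhead : ∀ h ∈ xs.head?, l ≤ h := by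
      intro h hh
      have := (List.isChain_cons.1 hch).1 h hh
      omega
    obtain ⟨ihlen, ihf, ihhd, ihch, ihzch, ihzdvd⟩ := ih l hchtail hhead
    have hrw : stepLam k prev (x :: xs) = l :: stepLam k l xs := rfl
    rw [hrw]
    refine ⟨by simp [ihlen], ?_, ?_, ?_, ?_, ?_⟩
    · exact List.Forall₂.cons ⟨d, hd⟩ ihf
    · intro h hh
      simp only [List.head?_cons, Option.mem_def, Option.some.injEq] at hh
      subst hh
      exact ⟨nextLam_lb k prev x, nextLam_ub k prev x hk⟩
    · refine List.isChain_cons.2 ⟨?_, ihch⟩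
      intro y hy
      exact ihhd y hy
    · rw [List.zipWith_cons_cons]
      refine List.isChain_cons.2 ⟨?_, ihzch⟩
      intro y hy
      cases xs with
      | nil => simp [stepLam] at hy
      | cons x' xs' =>
        have hlx' : l ≤ x' := hhead x' rfl
        set l' := nextLam k l x' with hl'
        obtain ⟨d', hd'⟩ := nextLam_decomp k l x' hlx'
        have hxx' : x ≤ x' := (List.isChain_cons.1 hch).1 x' rfl
        have hl'ub : l' < l + k := nextLam_ub k l x' hk
        have hll' : l ≤ l' := nextLam_lb k l x'
        have hy' : y = x' - l' := by
          simp [stepLam, List.head?] at hy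
          omega
        subst hy'
        have h1 : k * d < k * d' + k := by omega
        have h2 : k * d < k * (d' + 1) := by rw [Nat.mul_add, Nat.mul_one]; omega
        have h3 : d < d' + 1 := Nat.lt_of_mul_lt_mul_left h2
        have h4 : k * d ≤ k * d' := Nat.mul_le_mul_left k (by omega)
        omega
    · rw [List.zipWith_cons_cons]
      intro y hy
      rcases List.mem_cons.1 hy with hy | hy
      · exact ⟨d, by omega⟩
      · exact ihzdvd y hy

lemma stepLam_unique (k : ℕ) (hk : 0 < k) : ∀ (L ρ : List ℕ) (prev : ℕ),
    List.Forall₂ (fun l x => ∃ d, x = l + k * d) L ρ →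
    L.Chain' (fun p q => p ≤ q ∧ q < p + k) →
    (∀ h ∈ L.head?, prev ≤ h ∧ h < prev + k) →
    L = stepLam k prev ρ := by
  intro L
  induction L with
  | nil => intro ρ prev hf _ _; cases hf; rfl
  | cons l L' ih =>
    intro ρ prev hf hch hh
    cases hf with
    | cons hlx hf' =>
      rename_i x xs
      obtain ⟨d, hd⟩ := hlx
      obtain ⟨h1, h2⟩ := hh l rfl
      have hnl : nextLam k prev x = l := nextLam_unique k prev x l d hk h1 h2 hd
      have : stepLam k prev (x :: xs) = nextLam k prev x :: stepLam k (nextLam k prev x) xs := rfl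
      rw [this, hnl]
      congr 1
      refine ih xs l hf' hch.tail ?_
      intro h hh'
      exact (List.isChain_cons.1 hch).1 h hh'

lemma zipWith_add_sub (k : ℕ) : ∀ (L ρ : List ℕ),
    List.Forall₂ (fun l x => ∃ d, x = l + k * d) L ρ →
    List.zipWith (· + ·) L (List.zipWith (· - ·) ρ L) = ρ := by
  intro L ρ h
  induction h with
  | nil => rfl
  | cons h1 _ ih =>
    obtain ⟨d, hd⟩ := h1
    simp only [List.zipWith_cons_cons, ih]
    congr 1
    omega

lemma forall₂_zipWith_add (k : ℕ) : ∀ (L M : List ℕ), L.length = M.length →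
    (∀ y ∈ M, k ∣ y) →
    List.Forall₂ (fun l x => ∃ d, x = l + k * d) L (List.zipWith (· + ·) L M) := by
  intro L
  induction L with
  | nil => intro M h _; simp
  | cons l L' ih =>
    intro M h hdvd
    cases M with
    | nil => simp at h
    | cons y M' =>
      simp only [List.zipWith_cons_cons]
      refine List.Forall₂.cons ?_ (ih M' (by simpa using h) (fun z hz => hdvd z (by simp [hz])))
      obtain ⟨d, hd⟩ := hdvd y (by simp)
      exact ⟨d, by omega⟩

lemma zipWith_add_cancel : ∀ (L M M' : List ℕ), M.length = L.length → M'.length = L.length →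
    List.zipWith (· + ·) L M = List.zipWith (· + ·) L M' → M = M' := by
  intro L
  induction L with
  | nil => intro M M' h h' _; simp at h h'; rw [h, h']
  | cons l L' ih =>
    intro M M' h h' heq
    cases M with
    | nil => simp at h
    | cons y M₁ =>
      cases M' with
      | nil => simp at h'
      | cons y' M₁' =>
        simp only [List.zipWith_cons_cons, List.cons.injEq] at heq
        have := ih M₁ M₁' (by simpa using h) (by simpa using h') heq.2
        simp [this]
        omega

lemma reverse_zipWith (f : ℕ → ℕ → ℕ) : ∀ (L M : List ℕ), L.length = M.length →
    (List.zipWith f L M).reverse = List.zipWith f L.reverse M.reverse := by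
  intro L
  induction L with
  | nil => intro M h; simp
  | cons l L' ih =>
    intro M h
    cases M with
    | nil => simp at h
    | cons y M' =>
      have hl : L'.length = M'.length := by simpa using h
      simp only [List.zipWith_cons_cons, List.reverse_cons]
      rw [ih M' hl, List.zipWith_append (by simp [hl])]
      simp

lemma forall₂_exists_right {R : ℕ → ℕ → Prop} : ∀ {L ρ : List ℕ},
    List.Forall₂ R L ρ → ∀ x ∈ L, ∃ y ∈ ρ, R x y := by
  intro L ρ h
  induction h with
  | nil => simp
  | cons h1 _ ih =>
    intro x hx
    rcases List.mem_cons.1 hx with hx | hx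
    · subst hx; exact ⟨_, by simp, h1⟩
    · obtain ⟨y, hy, hr⟩ := ih x hx
      exact ⟨y, by simp [hy], hr⟩

lemma mem_zipWith_add : ∀ (L M : List ℕ), ∀ z ∈ List.zipWith (· + ·) L M,
    ∃ u ∈ L, ∃ v ∈ M, z = u + v := by
  intro L
  induction L with
  | nil => simp
  | cons l L' ih =>
    intro M z hz
    cases M with
    | nil => simp at hz
    | cons y M' =>
      simp only [List.zipWith_cons_cons] at hz
      rcases List.mem_cons.1 hz with hz | hz
      · exact ⟨l, by simp, y, by simp, hz ▸ rfl⟩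
      · obtain ⟨u, hu, v, hv, he⟩ := ih M' z hz
        exact ⟨u, by simp [hu], v, by simp [hv], he⟩

lemma chain'_zipWith_add : ∀ (L M : List ℕ), L.Chain' (· ≥ ·) → M.Chain' (· ≥ ·) →
    (List.zipWith (· + ·) L M).Chain' (· ≥ ·) := by
  intro L
  induction L with
  | nil => simp [List.Chain', List.isChain_nil]
  | cons l L' ih =>
    intro M hL hM
    cases M with
    | nil => simp [List.Chain', List.isChain_nil]
    | cons y M' =>
      simp only [List.zipWith_cons_cons]
      refine List.isChain_cons.2 ⟨?_, ih M' hL.tail hM.tail⟩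
      intro h hh
      cases L' with
      | nil => simp at hh
      | cons l' L'' =>
        cases M' with
        | nil => simp at hh
        | cons y' M'' =>
          simp only [List.zipWith_cons_cons, List.head?_cons, Option.mem_def,
            Option.some.injEq] at hh
          have h1 : l ≥ l' := (List.isChain_cons.1 hL).1 l' rfl
          have h2 : y ≥ y' := (List.isChain_cons.1 hM).1 y' rfl
          omega

lemma getLast?_le_of_sorted : ∀ (L : List ℕ) (c : ℕ), L.Pairwise (· ≥ ·) →
    L.getLast? = some c → ∀ x ∈ L, c ≤ x := by
  intro L
  induction L with
  | nil => simp
  | cons l L' ih =>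
    intro c hs hc x hx
    cases L' with
    | nil =>
      simp at hc hx
      omega
    | cons y L'' =>
      rw [List.getLast?_cons_cons] at hc
      rcases List.mem_cons.1 hx with hx | hx
      · subst hx
        have hcm : c ∈ y :: L'' := List.mem_of_getLast? hc
        exact (List.pairwise_cons.1 hs).1 c hcm
      · exact ih c (List.pairwise_cons.1 hs).2 hc x hx

lemma chain'_and {R S : ℕ → ℕ → Prop} : ∀ {l : List ℕ}, l.Chain' R → l.Chain' S →
    l.Chain' (fun a b => R a b ∧ S a b) := by
  intro l
  induction l with
  | nil => intro _ _; exact List.isChain_nil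
  | cons x xs ih =>
    intro hR hS
    refine List.isChain_cons.2 ⟨?_, ih (List.isChain_cons.1 hR).2 (List.isChain_cons.1 hS).2⟩
    intro y hy
    exact ⟨(List.isChain_cons.1 hR).1 y hy, (List.isChain_cons.1 hS).1 y hy⟩

end Stmt8Aux

open Stmt8Aux in
theorem stmt8 (a b k : ℕ) (ha : 1 ≤ a) (hab : a < b) (hbk : b ≤ k) :
    (∀ m : ℕ, 1 ≤ m → ∀ π : List ℕ, InPabk a b k π → π.length = m →
      ∃! p : List ℕ × List ℕ,
        IsBabk a b k m p.1 ∧ p.2.length = m ∧ p.2.Pairwise (· ≥ ·) ∧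
          (∀ x ∈ p.2, k ∣ x) ∧ π = List.zipWith (· + ·) p.1 p.2) ∧
    (∀ m : ℕ, 1 ≤ m → ∀ lam mu : List ℕ, IsBabk a b k m lam → mu.length = m →
      mu.Pairwise (· ≥ ·) → (∀ x ∈ mu, k ∣ x) →
        InPabk a b k (List.zipWith (· + ·) lam mu)) := by
  have hk : 0 < k := by omega
  have hak : a < k := by omega
  constructor
  · -- Part 1: existence and uniqueness of decomposition
    intro m hm π hπ hlen
    obtain ⟨hsort, hmem⟩ := hπ
    set ρ := π.reverse with hρdef
    have hρlen : ρ.length = m := by simp [hρdef, hlen]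
    have hρch : ρ.Chain' (· ≤ ·) := by
      have hpw : ρ.Pairwise (· ≤ ·) := List.pairwise_reverse.2 hsort
      exact hpw.isChain
    have hρhd : ∀ h ∈ ρ.head?, 1 ≤ h := by
      intro h hh
      have : h ∈ ρ := List.mem_of_mem_head? hh
      have : h ∈ π := by rwa [hρdef, List.mem_reverse] at this
      exact (hmem h this).1
    obtain ⟨hlenL, hF, hhd, hch, hzch, hzdvd⟩ := stepLam_spec k hk ρ 1 hρch hρhd
    set L := stepLam k 1 ρ with hLdef
    set lam := L.reverse with hlamdef
    set muR := List.zipWith (· - ·) ρ L with hmuRdef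
    set mu := muR.reverse with hmudef
    have hmuRlen : muR.length = m := by
      simp [hmuRdef, List.length_zipWith, hlenL, hρlen]
    have hLlen : L.length = m := by rw [hlenL, hρlen]
    have hlamlen : lam.length = m := by simp [hlamdef, hLlen]
    have hmulen : mu.length = m := by simp [hmudef, hmuRlen]
    -- π = zipWith (+) lam mu
    have hz : List.zipWith (· + ·) L muR = ρ := zipWith_add_sub k L ρ hF
    have hπeq : π = List.zipWith (· + ·) lam mu := by
      have h1 : π = (List.zipWith (· + ·) L muR).reverse := by
        rw [hz, hρdef, List.reverse_reverse]
      rw [h1, reverse_zipWith _ L muR (by rw [hLlen, hmuRlen])]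
    -- IsBabk
    have hlamsort : lam.Pairwise (· ≥ ·) := by
      have hLpw : L.Pairwise (· ≤ ·) :=
        List.isChain_iff_pairwise.1 (hch.imp (fun _ _ h => h.1))
      exact List.pairwise_reverse.2 hLpw
    have hlammod : ∀ x ∈ lam, x % k = a % k ∨ x % k = b % k := by
      intro x hx
      rw [hlamdef, List.mem_reverse] at hx
      obtain ⟨y, hy, d, hd⟩ := forall₂_exists_right hF x hx
      have hy' : y ∈ π := by rwa [hρdef, List.mem_reverse] at hy
      have hxy : x % k = y % k := by
        rw [hd, Nat.add_mul_mod_self_left]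
      rw [hxy]
      exact (hmem y hy').2
    have hlamlast : lam.getLast? = some a ∨ lam.getLast? = some b := by
      have hgl : lam.getLast? = L.head? := by rw [hlamdef, List.getLast?_reverse]
      cases hρnil : ρ with
      | nil => rw [hρnil] at hρlen; simp at hρlen; omega
      | cons x xs =>
        have hx' : x ∈ π := by
          rw [hρdef] at hρnil
          have : x ∈ π.reverse := by rw [hρnil]; simp
          rwa [List.mem_reverse] at this
        obtain ⟨hxpos, hxmod⟩ := hmem x hx'
        have hLhd : L.head? = some (nextLam k 1 x) := by
          rw [hLdef, hρnil]; rfl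
        rcases hxmod with hmod | hmod
        · left
          rw [hgl, hLhd]
          congr 1
          have hax : x % k = a := by rw [hmod, Nat.mod_eq_of_lt hak]
          have hdm := Nat.div_add_mod x k
          exact nextLam_unique k 1 x a (x / k) hk ha (by omega) (by omega)
        · right
          rw [hgl, hLhd]
          congr 1
          rcases Nat.lt_or_ge b k with hblt | hbge
          · have hbx : x % k = b := by rw [hmod, Nat.mod_eq_of_lt hblt]
            have hdm := Nat.div_add_mod x k
            exact nextLam_unique k 1 x b (x / k) hk (by omega) (by omega) (by omega)
          · have hbk' : b = k := by omega
            have hbx : x % k = 0 := by rw [hmod, hbk', Nat.mod_self]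
            have hdm := Nat.div_add_mod x k
            have hq1 : 1 ≤ x / k := by
              rcases Nat.eq_zero_or_pos (x / k) with h0 | h1
              · rw [h0] at hdm; omega
              · exact h1
            have h5 : k * (x / k - 1) + k * 1 = k * (x / k) := by
              rw [← Nat.mul_add]; congr 1; omega
            exact nextLam_unique k 1 x b (x / k - 1) hk (by omega) (by omega) (by omega)
    have hlamch : lam.Chain' (fun x y => x < y + k) := by
      have : L.Chain' (fun x y => y < x + k) := hch.imp (fun _ _ h => h.2)
      exact List.isChain_reverse.2 this
    have hIsB : IsBabk a b k m lam := ⟨hlamlen, hlamsort, hlammod, hlamlast, hlamch⟩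
    -- mu properties
    have hmusort : mu.Pairwise (· ≥ ·) := by
      have hpw : muR.Pairwise (· ≤ ·) := List.isChain_iff_pairwise.1 hzch
      exact List.pairwise_reverse.2 hpw
    have hmudvd : ∀ x ∈ mu, k ∣ x := by
      intro x hx
      rw [hmudef, List.mem_reverse] at hx
      exact hzdvd x hx
    refine ⟨(lam, mu), ⟨hIsB, hmulen, hmusort, hmudvd, hπeq⟩, ?_⟩
    -- uniqueness
    rintro ⟨lam', mu'⟩ ⟨hB', hmu'len, hmu'sort, hmu'dvd, heq'⟩
    dsimp only at hB' hmu'len hmu'sort hmu'dvd heq'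
    obtain ⟨hlam'len, hlam'sort, hlam'mod, hlam'last, hlam'ch⟩ := hB'
    set L' := lam'.reverse with hL'def
    have hρeq : ρ = List.zipWith (· + ·) L' mu'.reverse := by
      rw [hρdef, heq', reverse_zipWith _ lam' mu' (by rw [hlam'len, hmu'len])]
    have hF' : List.Forall₂ (fun l x => ∃ d, x = l + k * d) L' ρ := by
      rw [hρeq]
      refine forall₂_zipWith_add k L' mu'.reverse (by simp [hL'def, hlam'len, hmu'len]) ?_
      intro y hy
      exact hmu'dvd y (by rwa [List.mem_reverse] at hy)
    have hch1 : L'.Chain' (· ≤ ·) := by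
      have hpw : L'.Pairwise (· ≤ ·) := List.pairwise_reverse.2 hlam'sort
      exact hpw.isChain
    have hch2 : L'.Chain' (fun x y => y < x + k) := List.isChain_reverse.2 hlam'ch
    have hchW : L'.Chain' (fun p q => p ≤ q ∧ q < p + k) := chain'_and hch1 hch2
    have hhd' : ∀ h ∈ L'.head?, 1 ≤ h ∧ h < 1 + k := by
      intro h hh
      have hgl : L'.head? = lam'.getLast? := by rw [hL'def, List.head?_reverse]
      rw [hgl] at hh
      rcases hlam'last with hl | hl <;> rw [hl] at hh <;>
        simp only [Option.mem_def, Option.some.injEq] at hh <;> omega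
    have hL'eq : L' = L := stepLam_unique k hk L' ρ 1 hF' hchW hhd'
    have hlameq : lam' = lam := by
      rw [hlamdef, ← hL'eq, hL'def, List.reverse_reverse]
    have hmueq : mu' = mu := by
      refine zipWith_add_cancel lam mu' mu (by rw [hmu'len, hlamlen])
        (by rw [hmulen, hlamlen]) ?_
      rw [← hπeq, ← hlameq]
      exact heq'.symm
    rw [Prod.ext_iff]
    exact ⟨hlameq, hmueq⟩
  · -- Part 2: closure
    intro m hm lam mu hB hmulen hmusort hmudvd
    obtain ⟨hlen, hsortl, hmod, hlast, _⟩ := hB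
    constructor
    · have hchl : lam.Chain' (· ≥ ·) := hsortl.isChain
      have hchm : mu.Chain' (· ≥ ·) := hmusort.isChain
      have := chain'_zipWith_add lam mu hchl hchm
      exact List.isChain_iff_pairwise.1 this
    · intro x hx
      obtain ⟨u, hu, v, hv, rfl⟩ := mem_zipWith_add lam mu x hx
      obtain ⟨e, rfl⟩ := hmudvd v hv
      have hmodx : (u + k * e) % k = u % k := Nat.add_mul_mod_self_left u k e
      have hupos : 1 ≤ u := by
        rcases hlast with hl | hl
        · have := getLast?_le_of_sorted lam a hsortl hl u hu; omega
        · have := getLast?_le_of_sorted lam b hsortl hl u hu; omega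
      constructor
      · omega
      · rw [hmodx]
        exact hmod u hu
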